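/- For n > h ≥ 0, the number of edges of the Hasse diagram of the independent subsets of the h-th power of a cycle on n vertices, ordered by inclusion, equals n * F^(h)_{n-h}, where F^(h) is the h-Fibonacci sequence defined by F^(h)_m = 1 for 1 ≤ m ≤ h+1 and F^(h)_m = F^(h)_{m-1} + F^(h)_{m-h-1} for m > h+1. -/

import Mathlib

/-- Independent subsets of the h-th power of the path on n vertices:
subsets of {1,...,n} with all pairwise differences of distinct elements greater than h. -/
def pathSubsets (n h : ℕ) : Finset (Finset ℕ) :=
  (Finset.Icc 1 n).powerset.filter (fun S => ∀ i ∈ S, ∀ j ∈ S, i < j → i + h < j)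

def pathCount (n h k : ℕ) : ℕ := ((pathSubsets n h).filter (fun S => S.card = k)).card

def pathTotal (n h : ℕ) : ℕ := (pathSubsets n h).card

/-- Independent subsets of the h-th power of the cycle on n vertices:
subsets S of {1,...,n} with h < |i-j| < n-h for all distinct i,j ∈ S. -/
def cycleSubsets (n h : ℕ) : Finset (Finset ℕ) :=
  (Finset.Icc 1 n).powerset.filter
    (fun S => ∀ i ∈ S, ∀ j ∈ S, i < j → i + h < j ∧ j + h < n + i)

def cycleCount (n h k : ℕ) : ℕ := ((cycleSubsets n h).filter (fun S => S.card = k)).card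

def cycleTotal (n h : ℕ) : ℕ := (cycleSubsets n h).card

/-- Number of edges of the Hasse diagram of independent subsets of Pₙ⁽ʰ⁾ ordered by inclusion. -/
def pathEdges (n h : ℕ) : ℕ :=
  (((pathSubsets n h) ×ˢ (pathSubsets n h)).filter
    (fun p => p.1 ⊆ p.2 ∧ p.2.card = p.1.card + 1)).card

/-- Number of edges of the Hasse diagram of independent subsets of Cₙ⁽ʰ⁾ ordered by inclusion. -/
def cycleEdges (n h : ℕ) : ℕ :=
  (((cycleSubsets n h) ×ˢ (cycleSubsets n h)).filter
    (fun p => p.1 ⊆ p.2 ∧ p.2.card = p.1.card + 1)).card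




lemma pathTotal_zero (h : ℕ) : pathTotal 0 h = 1 := by
  simp [pathTotal, pathSubsets, Finset.filter_singleton]

lemma mem_pathSubsets {m h : ℕ} {S : Finset ℕ} :
    S ∈ pathSubsets m h ↔ (∀ i ∈ S, 1 ≤ i ∧ i ≤ m) ∧ ∀ i ∈ S, ∀ j ∈ S, i < j → i + h < j := by
  simp only [pathSubsets, Finset.mem_filter, Finset.mem_powerset, Finset.subset_iff,
    Finset.mem_Icc]

lemma pathSubsets_split (m h : ℕ) (hm : 1 ≤ m) :
    pathSubsets m h = pathSubsets (m-1) h ∪ (pathSubsets (m-h-1) h).image (insert m) := by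
  ext S
  simp only [Finset.mem_union, Finset.mem_image]
  constructor
  · intro hS
    rw [mem_pathSubsets] at hS
    obtain ⟨hsub, hgap⟩ := hS
    by_cases hmS : m ∈ S
    · right
      refine ⟨S.erase m, ?_, ?_⟩
      · rw [mem_pathSubsets]
        refine ⟨fun i hi => ?_, fun i hi j hj hij => hgap i (Finset.mem_of_mem_erase hi) j
          (Finset.mem_of_mem_erase hj) hij⟩
        have hiS := Finset.mem_of_mem_erase hi
        have hne := Finset.ne_of_mem_erase hi
        have hIcc := hsub i hiS
        have hlt : i < m := lt_of_le_of_ne hIcc.2 hne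
        have := hgap i hiS m hmS hlt
        omega
      · exact Finset.insert_erase hmS
    · left
      rw [mem_pathSubsets]
      refine ⟨fun i hi => ?_, hgap⟩
      have := hsub i hi
      have : i ≠ m := fun e => hmS (e ▸ hi)
      omega
  · rintro (hS | ⟨S', hS', rfl⟩)
    · rw [mem_pathSubsets] at hS ⊢
      exact ⟨fun i hi => by have := hS.1 i hi; omega, hS.2⟩
    · rw [mem_pathSubsets] at hS' ⊢
      constructor
      · intro i hi
        rcases Finset.mem_insert.mp hi with rfl | hi
        · omega
        · have := hS'.1 i hi; omega
      · intro i hi j hj hij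
        rcases Finset.mem_insert.mp hi with hi1 | hi2 <;>
          rcases Finset.mem_insert.mp hj with hj1 | hj2
        · omega
        · have := hS'.1 j hj2; omega
        · have := hS'.1 i hi2; omega
        · exact hS'.2 i hi2 j hj2 hij

lemma pathTotal_rec (m h : ℕ) (hm : 1 ≤ m) :
    pathTotal m h = pathTotal (m-1) h + pathTotal (m-h-1) h := by
  unfold pathTotal
  rw [pathSubsets_split m h hm, Finset.card_union_of_disjoint, Finset.card_image_of_injOn]
  · intro S hS T hT hST
    simp only [Finset.coe_sort_coe, Finset.mem_coe] at hS hT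
    rw [mem_pathSubsets] at hS hT
    have hmS : m ∉ S := fun hc => by have := hS.1 m hc; omega
    have hmT : m ∉ T := fun hc => by have := hT.1 m hc; omega
    have : (insert m S).erase m = (insert m T).erase m := by rw [hST]
    rwa [Finset.erase_insert hmS, Finset.erase_insert hmT] at this
  · rw [Finset.disjoint_right]
    rintro S hS hS'
    simp only [Finset.mem_image] at hS
    obtain ⟨T, hT, rfl⟩ := hS
    rw [mem_pathSubsets] at hS'
    have := hS'.1 m (Finset.mem_insert_self m T)
    omega

lemma pathTotal_eq_F (h : ℕ) (F : ℕ → ℕ)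
    (hF1 : ∀ m, 1 ≤ m → m ≤ h + 1 → F m = 1)
    (hFrec : ∀ m, m > h + 1 → F m = F (m - 1) + F (m - h - 1)) :
    ∀ m, pathTotal m h = F (m + h + 1) := by
  intro m
  induction m using Nat.strong_induction_on with
  | _ m ih =>
    rcases Nat.eq_zero_or_pos m with rfl | hm
    · rw [pathTotal_zero, hF1 (0+h+1) (by omega) (by omega)]
    · rw [pathTotal_rec m h hm, ih (m-1) (by omega), ih (m-h-1) (by omega)]
      rw [hFrec (m+h+1) (by omega)]
      have e1 : m + h + 1 - 1 = m - 1 + h + 1 := by omega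
      rw [e1]
      congr 1
      have e2 : m + h + 1 - h - 1 = m := by omega
      rw [e2]
      rcases le_or_gt m (h+1) with hc | hc
      · have : m - h - 1 = 0 := by omega
        rw [this]
        rw [hF1 (0 + h + 1) (by omega) (by omega), hF1 m (by omega) (by omega)]
      · congr 1; omega


lemma mem_cycleSubsets {n h : ℕ} {S : Finset ℕ} :
    S ∈ cycleSubsets n h ↔ (∀ i ∈ S, 1 ≤ i ∧ i ≤ n) ∧
      ∀ i ∈ S, ∀ j ∈ S, i < j → i + h < j ∧ j + h < n + i := by
  simp only [cycleSubsets, Finset.mem_filter, Finset.mem_powerset, Finset.subset_iff,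
    Finset.mem_Icc]

lemma cycle_hereditary {n h : ℕ} {S T : Finset ℕ} (hT : T ∈ cycleSubsets n h) (hST : S ⊆ T) :
    S ∈ cycleSubsets n h := by
  rw [mem_cycleSubsets] at hT ⊢
  exact ⟨fun i hi => hT.1 i (hST hi), fun i hi j hj => hT.2 i (hST hi) j (hST hj)⟩

/-- rotation by s on {1,...,n} -/
def rot (n s i : ℕ) : ℕ := (i - 1 + s) % n + 1

lemma rot_mem {n : ℕ} (hn : 0 < n) (s i : ℕ) : 1 ≤ rot n s i ∧ rot n s i ≤ n := by
  unfold rot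
  have := Nat.mod_lt (i - 1 + s) hn
  omega

lemma rot_rot (n s t i : ℕ) : rot n t (rot n s i) = rot n (s + t) i := by
  unfold rot
  simp only [Nat.add_sub_cancel]
  rw [Nat.mod_add_mod]
  ring_nf

lemma rot_id {n i : ℕ} (h1 : 1 ≤ i) (h2 : i ≤ n) : rot n n i = i := by
  unfold rot
  rw [Nat.add_mod_right, Nat.mod_eq_of_lt (by omega)]
  omega

lemma rot_pair {n h s i j : ℕ} (hi1 : 1 ≤ i) (hjn : j ≤ n) (hij : i < j)
    (h1 : i + h < j) (h2 : j + h < n + i) :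
    (rot n s i < rot n s j → rot n s i + h < rot n s j ∧ rot n s j + h < n + rot n s i) ∧
    (rot n s j < rot n s i → rot n s j + h < rot n s i ∧ rot n s i + h < n + rot n s j) := by
  have hn : 0 < n := by omega
  unfold rot
  set a := (i - 1 + s) % n with ha
  have hb : (j - 1 + s) % n = (a + (j - i)) % n := by
    rw [ha, Nat.mod_add_mod]
    congr 1
    omega
  have han : a < n := Nat.mod_lt _ hn
  rcases lt_or_ge (a + (j - i)) n with hc | hc
  · rw [hb, Nat.mod_eq_of_lt hc]
    omega
  · have h2n : a + (j - i) < 2 * n := by omega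
    rw [hb, Nat.mod_eq_sub_mod hc, Nat.mod_eq_of_lt (by omega)]
    omega

lemma rot_image_mem {n h : ℕ} (hn : 0 < n) (s : ℕ) {T : Finset ℕ}
    (hT : T ∈ cycleSubsets n h) : T.image (rot n s) ∈ cycleSubsets n h := by
  rw [mem_cycleSubsets] at hT ⊢
  constructor
  · intro a ha
    obtain ⟨i, _, rfl⟩ := Finset.mem_image.mp ha
    exact rot_mem hn s i
  · intro a ha b hb hab
    obtain ⟨i, hiT, rfl⟩ := Finset.mem_image.mp ha
    obtain ⟨j, hjT, rfl⟩ := Finset.mem_image.mp hb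
    have hi := hT.1 i hiT
    have hj := hT.1 j hjT
    rcases lt_trichotomy i j with hlt | rfl | hlt
    · have := hT.2 i hiT j hjT hlt
      exact (rot_pair hi.1 hj.2 hlt this.1 this.2).1 hab
    · omega
    · have := hT.2 j hjT i hiT hlt
      exact (rot_pair hj.1 hi.2 hlt this.1 this.2).2 hab

lemma rot_image_id {n : ℕ} {T : Finset ℕ} (hT : ∀ i ∈ T, 1 ≤ i ∧ i ≤ n) :
    T.image (rot n n) = T := by
  rw [Finset.image_congr (g := id), Finset.image_id]
  intro i hi
  exact rot_id (hT i hi).1 (hT i hi).2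

lemma count_rot {n h : ℕ} (hn : 0 < n) {x : ℕ} (hx1 : 1 ≤ x) (hx2 : x ≤ n) :
    ((cycleSubsets n h).filter (fun T => x ∈ T)).card
      = ((cycleSubsets n h).filter (fun T => 1 ∈ T)).card := by
  have hsx : x - 1 + (n + 1 - x) = n := by omega
  have hsx' : n + 1 - x + (x - 1) = n := by omega
  apply Finset.card_nbij' (fun T => T.image (rot n (n + 1 - x)))
    (fun U => U.image (rot n (x - 1)))
  · intro T hT
    rw [Finset.mem_coe, Finset.mem_filter] at hT ⊢
    refine ⟨rot_image_mem hn _ hT.1, ?_⟩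
    have : rot n (n + 1 - x) x = 1 := by
      unfold rot
      rw [hsx, Nat.mod_self]
    have hm := Finset.mem_image_of_mem (rot n (n + 1 - x)) hT.2
    rwa [this] at hm
  · intro U hU
    rw [Finset.mem_coe, Finset.mem_filter] at hU ⊢
    refine ⟨rot_image_mem hn _ hU.1, ?_⟩
    have : rot n (x - 1) 1 = x := by
      unfold rot
      simp only [Nat.sub_self, Nat.zero_add]
      rw [Nat.mod_eq_of_lt (by omega)]
      omega
    have hm := Finset.mem_image_of_mem (rot n (x - 1)) hU.2
    rwa [this] at hm
  · intro T hT
    rw [Finset.mem_coe, Finset.mem_filter] at hT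
    beta_reduce; rw [Finset.image_image]
    have : ∀ i ∈ T, (rot n (x - 1) ∘ rot n (n + 1 - x)) i = i := by
      intro i hi
      have hb := (mem_cycleSubsets.mp hT.1).1 i hi
      simp only [Function.comp_apply, rot_rot, hsx']
      exact rot_id hb.1 hb.2
    rw [Finset.image_congr (g := id) this, Finset.image_id]
  · intro U hU
    rw [Finset.mem_coe, Finset.mem_filter] at hU
    beta_reduce; rw [Finset.image_image]
    have : ∀ i ∈ U, (rot n (n + 1 - x) ∘ rot n (x - 1)) i = i := by
      intro i hi
      have hb := (mem_cycleSubsets.mp hU.1).1 i hi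
      simp only [Function.comp_apply, rot_rot, hsx]
      exact rot_id hb.1 hb.2
    rw [Finset.image_congr (g := id) this, Finset.image_id]







lemma count_one (n h : ℕ) (hn : h < n) :
    ((cycleSubsets n h).filter (fun T => 1 ∈ T)).card = pathTotal (n - 2*h - 1) h := by
  unfold pathTotal
  apply Finset.card_nbij' (fun T => (T.erase 1).image (fun i => i - (h+1)))
    (fun S => insert 1 (S.image (fun i => i + (h+1))))
  · -- forward maps into pathSubsets
    intro T hT
    rw [Finset.mem_coe, Finset.mem_filter] at hT
    obtain ⟨hTc, h1T⟩ := hT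
    rw [mem_cycleSubsets] at hTc
    -- bounds on elements of erase 1
    have key : ∀ i ∈ T.erase 1, h + 2 ≤ i ∧ i ≤ n - h := by
      intro i hi
      have hiT := Finset.mem_of_mem_erase hi
      have hne := Finset.ne_of_mem_erase hi
      have hb := hTc.1 i hiT
      have hlt : 1 < i := by omega
      have := hTc.2 1 h1T i hiT hlt
      omega
    beta_reduce; rw [Finset.mem_coe, mem_pathSubsets]
    constructor
    · intro a ha
      obtain ⟨i, hi, rfl⟩ := Finset.mem_image.mp ha
      have := key i hi
      omega
    · intro a ha b hb hab
      obtain ⟨i, hi, rfl⟩ := Finset.mem_image.mp ha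
      obtain ⟨j, hj, rfl⟩ := Finset.mem_image.mp hb
      have hki := key i hi
      have hkj := key j hj
      have hij : i < j := by omega
      have := hTc.2 i (Finset.mem_of_mem_erase hi) j (Finset.mem_of_mem_erase hj) hij
      omega
  · -- backward maps into filter
    intro S hS
    rw [Finset.mem_coe, mem_pathSubsets] at hS
    rw [Finset.mem_coe, Finset.mem_filter]
    refine ⟨?_, Finset.mem_insert_self 1 _⟩
    rw [mem_cycleSubsets]
    have key : ∀ a ∈ S.image (fun i => i + (h+1)), h + 2 ≤ a ∧ a ≤ n - h := by
      intro a ha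
      obtain ⟨i, hi, rfl⟩ := Finset.mem_image.mp ha
      have := hS.1 i hi
      omega
    constructor
    · intro i hi
      rcases Finset.mem_insert.mp hi with rfl | hi2
      · omega
      · have := key i hi2; omega
    · intro i hi j hj hij
      rcases Finset.mem_insert.mp hi with hi1 | hi2 <;>
        rcases Finset.mem_insert.mp hj with hj1 | hj2
      · omega
      · have := key j hj2; omega
      · have := key i hi2; omega
      · have hki := key i hi2
        have hkj := key j hj2
        obtain ⟨i', hi', rfl⟩ := Finset.mem_image.mp hi2
        obtain ⟨j', hj', rfl⟩ := Finset.mem_image.mp hj2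
        have : i' < j' := by omega
        have := hS.2 i' hi' j' hj' this
        omega
  · -- left inverse
    intro T hT
    rw [Finset.mem_coe, Finset.mem_filter] at hT
    obtain ⟨hTc, h1T⟩ := hT
    rw [mem_cycleSubsets] at hTc
    have key : ∀ i ∈ T.erase 1, h + 2 ≤ i := by
      intro i hi
      have hiT := Finset.mem_of_mem_erase hi
      have hne := Finset.ne_of_mem_erase hi
      have hb := hTc.1 i hiT
      have hlt : 1 < i := by omega
      have := hTc.2 1 h1T i hiT hlt
      omega
    beta_reduce; rw [Finset.image_image]
    have : (T.erase 1).image ((fun i => i + (h+1)) ∘ fun i => i - (h+1)) = T.erase 1 := by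
      rw [Finset.image_congr (g := id), Finset.image_id]
      intro i hi
      have := key i hi
      simp only [Function.comp_apply, id_eq]
      omega
    rw [this, Finset.insert_erase h1T]
  · -- right inverse
    intro S hS
    rw [Finset.mem_coe, mem_pathSubsets] at hS
    have h1notin : 1 ∉ S.image (fun i => i + (h+1)) := by
      intro hc
      obtain ⟨i, hi, he⟩ := Finset.mem_image.mp hc
      have he' : i + (h+1) = 1 := he
      have := hS.1 i hi
      omega
    beta_reduce; rw [Finset.erase_insert h1notin, Finset.image_image]
    have heq : ∀ i ∈ S, ((fun i => i - (h+1)) ∘ fun i => i + (h+1)) i = i := by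
      intro i hi
      simp
    rw [Finset.image_congr (g := id) heq, Finset.image_id]

lemma cycleEdges_eq_sum (n h : ℕ) :
    cycleEdges n h = ∑ T ∈ cycleSubsets n h, T.card := by
  unfold cycleEdges
  rw [Finset.card_filter, Finset.sum_product]
  rw [Finset.sum_comm]
  apply Finset.sum_congr rfl
  intro T hT
  rw [← Finset.card_filter]
  have himg : (cycleSubsets n h).filter (fun S => S ⊆ T ∧ T.card = S.card + 1)
      = T.image (fun x => T.erase x) := by
    ext S
    simp only [Finset.mem_filter, Finset.mem_image]
    constructor
    · rintro ⟨hSA, hST, hcard⟩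
      have hne : (T \ S).Nonempty := by
        rw [← Finset.card_pos, Finset.card_sdiff_of_subset hST]
        omega
      obtain ⟨x, hx⟩ := hne
      rw [Finset.mem_sdiff] at hx
      refine ⟨x, hx.1, ?_⟩
      refine (Finset.eq_of_subset_of_card_le ?_ ?_).symm
      · intro a ha
        exact Finset.mem_erase.mpr ⟨fun he => hx.2 (he ▸ ha), hST ha⟩
      · rw [Finset.card_erase_of_mem hx.1]
        omega
    · rintro ⟨x, hx, rfl⟩
      have hsub : T.erase x ⊆ T := Finset.erase_subset x T
      refine ⟨?_, hsub, ?_⟩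
      · -- hereditary
        rw [mem_cycleSubsets] at hT ⊢
        exact ⟨fun i hi => hT.1 i (hsub hi), fun i hi j hj => hT.2 i (hsub hi) j (hsub hj)⟩
      · rw [Finset.card_erase_of_mem hx]
        have : 0 < T.card := Finset.card_pos.mpr ⟨x, hx⟩
        omega
  rw [himg, Finset.card_image_of_injOn]
  intro x hx y hy hxy
  simp only [Finset.mem_coe] at hx hy
  by_contra hne
  have hxy' : T.erase x = T.erase y := hxy
  have : y ∈ T.erase x := Finset.mem_erase.mpr ⟨fun e => hne e.symm, hy⟩
  rw [hxy'] at this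
  exact (Finset.mem_erase.mp this).1 rfl

theorem stmt19 (n h : ℕ) (hn : h < n) (F : ℕ → ℕ)
    (hF1 : ∀ m, 1 ≤ m → m ≤ h + 1 → F m = 1)
    (hFrec : ∀ m, m > h + 1 → F m = F (m - 1) + F (m - h - 1)) :
    cycleEdges n h = n * F (n - h) := by
  have hn0 : 0 < n := by omega
  rw [cycleEdges_eq_sum]
  have hTcard : ∀ T ∈ cycleSubsets n h,
      T.card = ∑ x ∈ Finset.Icc 1 n, if x ∈ T then 1 else 0 := by
    intro T hT
    rw [← Finset.card_filter]
    congr 1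
    rw [Finset.filter_mem_eq_inter]
    exact (Finset.inter_eq_right.mpr (Finset.mem_powerset.mp (Finset.mem_filter.mp hT).1)).symm
  calc ∑ T ∈ cycleSubsets n h, T.card
      = ∑ T ∈ cycleSubsets n h, ∑ x ∈ Finset.Icc 1 n, (if x ∈ T then 1 else 0) :=
        Finset.sum_congr rfl hTcard
    _ = ∑ x ∈ Finset.Icc 1 n, ∑ T ∈ cycleSubsets n h, (if x ∈ T then 1 else 0) :=
        Finset.sum_comm
    _ = ∑ x ∈ Finset.Icc 1 n, ((cycleSubsets n h).filter (fun T => x ∈ T)).card := by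
        exact Finset.sum_congr rfl fun x _ => (Finset.card_filter _ _).symm
    _ = ∑ x ∈ Finset.Icc 1 n, ((cycleSubsets n h).filter (fun T => 1 ∈ T)).card := by
        refine Finset.sum_congr rfl fun x hx => ?_
        rw [Finset.mem_Icc] at hx
        exact count_rot hn0 hx.1 hx.2
    _ = n * ((cycleSubsets n h).filter (fun T => 1 ∈ T)).card := by
        rw [Finset.sum_const, smul_eq_mul, Nat.card_Icc, Nat.add_sub_cancel]
    _ = n * F (n - h) := by
        rw [count_one n h hn, pathTotal_eq_F h F hF1 hFrec]
        congr 1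
        rcases le_or_gt (2*h+1) n with hc | hc
        · congr 1
          omega
        · have e : n - 2*h - 1 = 0 := by omega
          rw [e, hF1 (0+h+1) (by omega) (by omega), hF1 (n-h) (by omega) (by omega)]
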